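/- arXiv:1209.0827 — 10 statements merged into one kernel-verified Lean document; each statement's English description precedes it below -/
import Mathlib

section
/- For every N ≥ 1, the N×N tridiagonal matrix A_N with -1 on the diagonal and 2 on the off-diagonals is invertible (equivalently, has trivial kernel). -/
/-- The N×N tridiagonal real matrix with -1 on the diagonal and 2 on the
super- and sub-diagonals. -/
def triA (N : ℕ) : Matrix (Fin N) (Fin N) ℝ :=
  Matrix.of fun i j =>
    if (i : ℕ) = (j : ℕ) then -1
    else if (i : ℕ) + 1 = (j : ℕ) ∨ (j : ℕ) + 1 = (i : ℕ) then 2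
    else 0

/-- Integer version of `triA`. -/
def triAZ (N : ℕ) : Matrix (Fin N) (Fin N) ℤ :=
  Matrix.of fun i j =>
    if (i : ℕ) = (j : ℕ) then -1
    else if (i : ℕ) + 1 = (j : ℕ) ∨ (j : ℕ) + 1 = (i : ℕ) then 2
    else 0

lemma triAZ_map (N : ℕ) : (Int.castRingHom ℝ).mapMatrix (triAZ N) = triA N := by
  ext i j
  simp only [RingHom.mapMatrix_apply, Matrix.map_apply, triAZ, triA, Matrix.of_apply]
  split_ifs <;> simp

lemma triAZ_mod2 (N : ℕ) : (Int.castRingHom (ZMod 2)).mapMatrix (triAZ N) = 1 := by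
  ext i j
  simp only [RingHom.mapMatrix_apply, Matrix.map_apply, triAZ, Matrix.of_apply,
    Matrix.one_apply]
  by_cases h : (i : ℕ) = (j : ℕ)
  · have : i = j := Fin.ext h
    simp [h, this]
  · have : ¬ i = j := fun hc => h (by rw [hc])
    simp only [h, if_false, this]
    split_ifs <;> decide

lemma triAZ_det_ne_zero (N : ℕ) : (triAZ N).det ≠ 0 := by
  intro h
  have h2 : ((triAZ N).det : ZMod 2) = 1 := by
    have := RingHom.map_det (Int.castRingHom (ZMod 2)) (triAZ N)
    rw [triAZ_mod2] at this
    simpa using this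
  rw [h] at h2
  simp at h2

lemma triA_det_ne_zero (N : ℕ) : (triA N).det ≠ 0 := by
  have := RingHom.map_det (Int.castRingHom ℝ) (triAZ N)
  rw [triAZ_map] at this
  rw [← this]
  simpa using triAZ_det_ne_zero N

theorem triA_invertible :
    ∀ N : ℕ, 1 ≤ N →
      (triA N).det ≠ 0 ∧ ∀ v : Fin N → ℝ, (triA N).mulVec v = 0 → v = 0 := by
  intro N _
  refine ⟨triA_det_ne_zero N, fun v hv => ?_⟩
  exact Matrix.eq_zero_of_mulVec_eq_zero (triA_det_ne_zero N) hv
end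

section
/- If b : ℝ → ℂ^N solves the Toy Model system -i·(d/dt)b_j = -|b_j|²·b_j + 2·b_{j-1}²·conj(b_j) + 2·b_{j+1}²·conj(b_j) (with convention b_0 = b_{N+1} = 0), then the mass M(t) = Σ_{j=1}^N |b_j(t)|² is constant in time. -/
open Finset

private lemma hasDerivAt_normSq_comp {f : ℝ → ℂ} {f' : ℂ} {t : ℝ}
    (h : HasDerivAt f f' t) :
    HasDerivAt (fun s => Complex.normSq (f s))
      (2 * ((starRingEnd ℂ) (f t) * f').re) t := by
  have hre : HasDerivAt (fun s => (f s).re) f'.re t :=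
    Complex.reCLM.hasFDerivAt.comp_hasDerivAt t h
  have him : HasDerivAt (fun s => (f s).im) f'.im t :=
    Complex.imCLM.hasFDerivAt.comp_hasDerivAt t h
  have H := (hre.fun_mul hre).fun_add (him.fun_mul him)
  have hfun : (fun s => Complex.normSq (f s)) =
      fun s => (f s).re * (f s).re + (f s).im * (f s).im := by
    funext s; simp [Complex.normSq_apply]
  rw [hfun]
  refine H.congr_deriv ?_
  simp only [Complex.mul_re, Complex.conj_re, Complex.conj_im]
  ring

open Finset in
/-- Mass conservation for the Toy Model
`-i b_j' = -|b_j|² b_j + 2 b_{j-1}² conj(b_j) + 2 b_{j+1}² conj(b_j)`,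
with Dirichlet boundary conditions `b_0 = b_{N+1} = 0`. -/
theorem toy_model_mass_conservation (N : ℕ) (b : ℕ → ℝ → ℂ)
    (hdiff : ∀ j, Differentiable ℝ (b j))
    (hbc0 : ∀ t, b 0 t = 0) (hbcN : ∀ t, b (N + 1) t = 0)
    (hode : ∀ j ∈ Finset.Icc 1 N, ∀ t : ℝ,
      -Complex.I * deriv (b j) t =
        -(‖b j t‖ : ℂ) ^ 2 * b j t
          + 2 * (b (j - 1) t) ^ 2 * (starRingEnd ℂ) (b j t)
          + 2 * (b (j + 1) t) ^ 2 * (starRingEnd ℂ) (b j t)) :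
    ∀ s t : ℝ,
      (∑ j ∈ Finset.Icc 1 N, ‖b j s‖ ^ 2) =
        ∑ j ∈ Finset.Icc 1 N, ‖b j t‖ ^ 2 := by
  set φ : ℕ → ℝ → ℝ :=
    fun k t => ((b k t) ^ 2 * (starRingEnd ℂ) (b (k + 1) t) ^ 2).im with hφ
  have hderiv : ∀ t, HasDerivAt
      (fun s => ∑ j ∈ Finset.Icc 1 N, Complex.normSq (b j s)) 0 t := by
    intro t
    have H : ∀ j ∈ Finset.Icc 1 N, HasDerivAt (fun s => Complex.normSq (b j s))
        (4 * (φ j t - φ (j - 1) t)) t := by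
      intro j hj
      have hb := ((hdiff j) t).hasDerivAt
      have h1 := hasDerivAt_normSq_comp hb
      have hid : deriv (b j) t = Complex.I *
          (-(‖b j t‖ : ℂ) ^ 2 * b j t
            + 2 * (b (j - 1) t) ^ 2 * (starRingEnd ℂ) (b j t)
            + 2 * (b (j + 1) t) ^ 2 * (starRingEnd ℂ) (b j t)) := by
        rw [← hode j hj t, ← mul_assoc]
        simp [Complex.I_mul_I]
      rw [hid] at h1
      have habs : ((‖b j t‖ : ℝ) : ℂ) ^ 2
          = b j t * (starRingEnd ℂ) (b j t) := by
        rw [← Complex.ofReal_pow, Complex.sq_norm, Complex.mul_conj]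
      convert h1 using 1
      have e : j - 1 + 1 = j := by
        have := (Finset.mem_Icc.mp hj).1; omega
      rw [habs]
      simp only [hφ, e]
      simp only [pow_two, Complex.mul_re, Complex.mul_im, Complex.add_re,
        Complex.add_im, Complex.neg_re, Complex.neg_im, Complex.I_re,
        Complex.I_im, Complex.conj_re, Complex.conj_im, Complex.re_ofNat,
        Complex.im_ofNat]
      ring
    have Hsum := HasDerivAt.fun_sum H
    have hzero : ∑ j ∈ Finset.Icc 1 N, (4 * (φ j t - φ (j - 1) t)) = 0 := by
      have h0 : φ 0 t = 0 := by simp [hφ, hbc0 t]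
      have hN : φ N t = 0 := by simp [hφ, hbcN t]
      rw [show Finset.Icc 1 N = Finset.Ico 1 (N + 1) from (Finset.Ico_add_one_right_eq_Icc 1 N).symm,
        Finset.sum_Ico_eq_sum_range]
      simp only [Nat.add_sub_cancel]
      have key : ∀ i ∈ Finset.range N, 4 * (φ (1 + i) t - φ (1 + i - 1) t)
          = (fun k => 4 * φ k t) (i + 1) - (fun k => 4 * φ k t) i := by
        intro i _
        have : 1 + i - 1 = i := by omega
        rw [this, Nat.add_comm 1 i]
        ring
      rw [Finset.sum_congr rfl key, Finset.sum_range_sub (fun k => 4 * φ k t)]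
      simp [h0, hN]
    rw [hzero] at Hsum
    exact Hsum
  have hconst := is_const_of_deriv_eq_zero
    (f := fun s => ∑ j ∈ Finset.Icc 1 N, Complex.normSq (b j s))
    (fun t => (hderiv t).differentiableAt) (fun t => (hderiv t).deriv)
  intro s t
  simp only [Complex.sq_norm]
  exact hconst s t
end

section
/- If b : ℝ → ℂ^N solves the Toy Model system with Dirichlet boundary conditions, then the Hamiltonian H(t) = Σ_{j=1}^N ( (1/4)|b_j(t)|⁴ − Re( conj(b_j(t))² · b_{j-1}(t)² ) ) is constant in time. -/
private lemma toy_telesc (F : ℕ → ℝ) : ∀ n, ∑ j ∈ Finset.Icc 1 n, (F j - F (j - 1)) = F n - F 0 := by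
  intro n
  induction n with
  | zero => simp
  | succ n ih =>
      rw [Finset.sum_Icc_succ_top (by omega), ih]
      simp

open Finset in
/-- Conservation of the Hamiltonian
`H = Σ_{j=1}^N ( (1/4)|b_j|⁴ − Re( conj(b_j)² b_{j-1}² ) )`
for the Toy Model with Dirichlet boundary conditions. -/
theorem toy_model_hamiltonian_conservation (N : ℕ) (b : ℕ → ℝ → ℂ)
    (hdiff : ∀ j, Differentiable ℝ (b j))
    (hbc0 : ∀ t, b 0 t = 0) (hbcN : ∀ t, b (N + 1) t = 0)
    (hode : ∀ j ∈ Finset.Icc 1 N, ∀ t : ℝ,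
      -Complex.I * deriv (b j) t =
        -(‖b j t‖ : ℂ) ^ 2 * b j t
          + 2 * (b (j - 1) t) ^ 2 * (starRingEnd ℂ) (b j t)
          + 2 * (b (j + 1) t) ^ 2 * (starRingEnd ℂ) (b j t)) :
    ∀ s t : ℝ,
      (∑ j ∈ Finset.Icc 1 N,
        ((1 / 4) * ‖b j s‖ ^ 4
          - (((starRingEnd ℂ) (b j s)) ^ 2 * (b (j - 1) s) ^ 2).re)) =
      ∑ j ∈ Finset.Icc 1 N,
        ((1 / 4) * ‖b j t‖ ^ 4
          - (((starRingEnd ℂ) (b j t)) ^ 2 * (b (j - 1) t) ^ 2).re) := by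
  have habs : ∀ z : ℂ, ((‖z‖ : ℝ) : ℂ) ^ 2 = z * (starRingEnd ℂ) z := by
    intro z
    rw [← Complex.ofReal_pow, Complex.sq_norm, Complex.mul_conj]
  -- uniform derivative formula, also valid at j = 0 thanks to the boundary condition
  have hD : ∀ j, j ≤ N → ∀ t : ℝ, HasDerivAt (b j)
      (Complex.I * (-(b j t * (starRingEnd ℂ) (b j t)) * b j t
        + 2 * (b (j - 1) t) ^ 2 * (starRingEnd ℂ) (b j t)
        + 2 * (b (j + 1) t) ^ 2 * (starRingEnd ℂ) (b j t))) t := by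
    intro j hjN t
    rcases Nat.eq_zero_or_pos j with rfl | hj1
    · have h0 : b 0 = fun _ => (0 : ℂ) := funext hbc0
      simp only [hbc0, map_zero, mul_zero, zero_mul, neg_zero, add_zero, zero_add]
      rw [h0]
      exact hasDerivAt_const t 0
    · have h := hode j (Finset.mem_Icc.mpr ⟨hj1, hjN⟩) t
      have hd : HasDerivAt (b j) (deriv (b j) t) t := (hdiff j t).hasDerivAt
      have e1 : Complex.I * (-(b j t * (starRingEnd ℂ) (b j t)) * b j t
          + 2 * (b (j - 1) t) ^ 2 * (starRingEnd ℂ) (b j t)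
          + 2 * (b (j + 1) t) ^ 2 * (starRingEnd ℂ) (b j t)) = deriv (b j) t := by
        rw [← habs, ← h, ← mul_assoc, mul_neg, Complex.I_mul_I, neg_neg, one_mul]
      rw [e1]
      exact hd
  set F : ℕ → ℝ → ℝ := fun j t =>
    2 * Complex.normSq (b j t) * ((b j t) ^ 2 * ((starRingEnd ℂ) (b (j + 1) t)) ^ 2).im
      - 4 * Complex.normSq (b j t) * ((b (j - 1) t) ^ 2 * ((starRingEnd ℂ) (b (j + 1) t)) ^ 2).im
    with hF
  have key : ∀ j ∈ Finset.Icc 1 N, ∀ t : ℝ, HasDerivAt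
      (fun t => (1 / 4) * ‖b j t‖ ^ 4
        - (((starRingEnd ℂ) (b j t)) ^ 2 * (b (j - 1) t) ^ 2).re)
      (F j t - F (j - 1) t) t := by
    intro j hj t
    obtain ⟨hj1, hjN⟩ := Finset.mem_Icc.mp hj
    have hbj := hD j hjN t
    have hbm := hD (j - 1) (by omega) t
    rw [Nat.sub_add_cancel hj1] at hbm
    have hfun : (fun t => (1 / 4) * ‖b j t‖ ^ 4
          - (((starRingEnd ℂ) (b j t)) ^ 2 * (b (j - 1) t) ^ 2).re)
        = fun t => ((((1 : ℝ) / 4 : ℝ) : ℂ) * (((starRingEnd ℂ) (b j t) * b j t)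
            * ((starRingEnd ℂ) (b j t) * b j t))
          - ((starRingEnd ℂ) (b j t) * (starRingEnd ℂ) (b j t))
            * (b (j - 1) t * b (j - 1) t)).re := by
      funext u
      have h1 : (starRingEnd ℂ) (b j u) * b j u
          = ((‖b j u‖ ^ 2 : ℝ) : ℂ) := by
        rw [mul_comm, ← habs, ← Complex.ofReal_pow]
      rw [h1, Complex.sub_re, ← Complex.ofReal_mul, ← Complex.ofReal_mul, Complex.ofReal_re]
      rw [show (starRingEnd ℂ) (b j u) * (starRingEnd ℂ) (b j u) * (b (j - 1) u * b (j - 1) u)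
          = ((starRingEnd ℂ) (b j u)) ^ 2 * (b (j - 1) u) ^ 2 by ring]
      ring_nf
    rw [hfun]
    have hcj : HasDerivAt (fun t => (starRingEnd ℂ) (b j t))
        ((starRingEnd ℂ) (Complex.I * (-(b j t * (starRingEnd ℂ) (b j t)) * b j t
          + 2 * (b (j - 1) t) ^ 2 * (starRingEnd ℂ) (b j t)
          + 2 * (b (j + 1) t) ^ 2 * (starRingEnd ℂ) (b j t)))) t := hbj.star
    have hG := (((hcj.mul hbj).mul (hcj.mul hbj)).const_mul (((1 : ℝ) / 4 : ℝ) : ℂ)).sub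
      ((hcj.mul hcj).mul (hbm.mul hbm))
    have hR := Complex.reCLM.hasFDerivAt.comp_hasDerivAt t hG
    convert hR using 1
    · rfl
    · rfl
    · rfl
    rw [Complex.reCLM_apply]
    simp only [hF]
    rw [show j - 1 + 1 = j from Nat.sub_add_cancel hj1]
    simp only [Complex.mul_re, Complex.mul_im, Complex.add_re, Complex.add_im,
      Complex.sub_re, Complex.sub_im, Complex.neg_re, Complex.neg_im, Complex.I_re,
      Complex.I_im, Complex.conj_re, Complex.conj_im, Complex.ofReal_re, Complex.ofReal_im,
      Complex.normSq_apply, Complex.re_ofNat, Complex.im_ofNat, pow_succ, pow_zero, one_mul,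
      Complex.one_re, Complex.one_im, mul_one, Nat.cast_ofNat, Pi.mul_apply]
    ring
  intro s t
  have H : ∀ u : ℝ, HasDerivAt
      (fun u => ∑ j ∈ Finset.Icc 1 N,
        ((1 / 4) * ‖b j u‖ ^ 4
          - (((starRingEnd ℂ) (b j u)) ^ 2 * (b (j - 1) u) ^ 2).re)) 0 u := by
    intro u
    have h := HasDerivAt.sum (fun j hj => key j hj u)
    have hz : ∑ j ∈ Finset.Icc 1 N, (F j u - F (j - 1) u) = 0 := by
      rw [toy_telesc (fun j => F j u) N]
      have hF0 : F 0 u = 0 := by simp [hF, hbc0]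
      have hFN : F N u = 0 := by simp [hF, hbcN u]
      rw [hF0, hFN, sub_zero]
    rwa [hz, Finset.sum_fn] at h
  exact is_const_of_deriv_eq_zero (fun u => (H u).differentiableAt)
    (fun u => (H u).deriv) s t
end

section
/- Under the Madelung transformation b_j = √(ρ_j)·e^{iφ_j} with ρ_j > 0, the Toy Model equation -i·b_j' = -|b_j|²·b_j + 2·b_{j-1}²·conj(b_j) + 2·b_{j+1}²·conj(b_j) is equivalent to the hydrodynamic system φ_j' = -ρ_j + 2ρ_{j-1}·cos(2(φ_{j-1}-φ_j)) + 2ρ_{j+1}·cos(2(φ_{j+1}-φ_j)) and ρ_j' = -4ρ_j·ρ_{j-1}·sin(2(φ_{j-1}-φ_j)) - 4ρ_j·ρ_{j+1}·sin(2(φ_{j+1}-φ_j)). -/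
/-- Madelung transformation: under `b_j = √(ρ_j) e^{iφ_j}` with `ρ_j > 0`,
the Toy Model equations are equivalent to the hydrodynamic system. -/
theorem toy_model_madelung_equivalence (N : ℕ) (ρ φ : ℕ → ℝ → ℝ)
    (hρdiff : ∀ j, Differentiable ℝ (ρ j)) (hφdiff : ∀ j, Differentiable ℝ (φ j))
    (hρpos : ∀ j ∈ Finset.Icc 1 N, ∀ t : ℝ, 0 < ρ j t)
    (hbc0 : ∀ t : ℝ, ρ 0 t = 0) (hbcN : ∀ t : ℝ, ρ (N + 1) t = 0)
    (b : ℕ → ℝ → ℂ)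
    (hb : ∀ j t, b j t = (Real.sqrt (ρ j t) : ℂ) * Complex.exp (Complex.I * (φ j t))) :
    (∀ j ∈ Finset.Icc 1 N, ∀ t : ℝ,
      -Complex.I * deriv (b j) t =
        -(‖b j t‖ : ℂ) ^ 2 * b j t
          + 2 * (b (j - 1) t) ^ 2 * (starRingEnd ℂ) (b j t)
          + 2 * (b (j + 1) t) ^ 2 * (starRingEnd ℂ) (b j t))
    ↔
    (∀ j ∈ Finset.Icc 1 N, ∀ t : ℝ,
      deriv (φ j) t =
        -ρ j t + 2 * ρ (j - 1) t * Real.cos (2 * (φ (j - 1) t - φ j t))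
          + 2 * ρ (j + 1) t * Real.cos (2 * (φ (j + 1) t - φ j t)) ∧
      deriv (ρ j) t =
        -4 * ρ j t * ρ (j - 1) t * Real.sin (2 * (φ (j - 1) t - φ j t))
          - 4 * ρ j t * ρ (j + 1) t * Real.sin (2 * (φ (j + 1) t - φ j t))) := by
  refine forall₂_congr fun j hj => forall_congr' fun t => ?_
  obtain ⟨hj1, hjN⟩ := Finset.mem_Icc.mp hj
  have hr : 0 < ρ j t := hρpos j hj t
  have hrm : 0 ≤ ρ (j - 1) t := by
    rcases eq_or_lt_of_le hj1 with h | h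
    · rw [← h]; simp [hbc0]
    · exact (hρpos (j - 1) (Finset.mem_Icc.mpr ⟨by omega, by omega⟩) t).le
  have hrp : 0 ≤ ρ (j + 1) t := by
    rcases eq_or_lt_of_le hjN with h | h
    · rw [h]; simp [hbcN]
    · exact (hρpos (j + 1) (Finset.mem_Icc.mpr ⟨by omega, by omega⟩) t).le
  -- derivative of b j
  have hsd : HasDerivAt (fun u => Real.sqrt (ρ j u))
      (1 / (2 * Real.sqrt (ρ j t)) * deriv (ρ j) t) t :=
    (Real.hasDerivAt_sqrt hr.ne').comp t ((hρdiff j t).hasDerivAt)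
  have hsdC : HasDerivAt (fun u => ((Real.sqrt (ρ j u) : ℝ) : ℂ))
      ((1 / (2 * Real.sqrt (ρ j t)) * deriv (ρ j) t : ℝ) : ℂ) t := hsd.ofReal_comp
  have hφC : HasDerivAt (fun u => ((φ j u : ℝ) : ℂ)) ((deriv (φ j) t : ℝ) : ℂ) t :=
    ((hφdiff j t).hasDerivAt).ofReal_comp
  have hexpd : HasDerivAt (fun u => Complex.exp (Complex.I * (φ j u)))
      (Complex.exp (Complex.I * (φ j t)) * (Complex.I * (deriv (φ j) t : ℝ))) t :=
    (hφC.const_mul Complex.I).cexp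
  have hb' : deriv (b j) t =
      ((1 / (2 * Real.sqrt (ρ j t)) * deriv (ρ j) t : ℝ) : ℂ) *
        Complex.exp (Complex.I * (φ j t)) +
      (Real.sqrt (ρ j t) : ℂ) *
        (Complex.exp (Complex.I * (φ j t)) * (Complex.I * (deriv (φ j) t : ℝ))) := by
    have hbf : b j = fun u => ((Real.sqrt (ρ j u) : ℂ)) * Complex.exp (Complex.I * (φ j u)) :=
      funext (hb j)
    rw [hbf]; exact (hsdC.mul hexpd).deriv
  -- abbreviations
  set s := Real.sqrt (ρ j t) with hsdef
  set E := Complex.exp (Complex.I * (φ j t)) with hEdef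
  set Em := Complex.exp (Complex.I * (φ (j - 1) t)) with hEmdef
  set Ep := Complex.exp (Complex.I * (φ (j + 1) t)) with hEpdef
  have hE : E ≠ 0 := Complex.exp_ne_zero _
  have hs : 0 < s := Real.sqrt_pos.mpr hr
  have hs0 : (s : ℂ) ≠ 0 := by exact_mod_cast hs.ne'
  have hs2c : (s : ℂ) ^ 2 = (ρ j t : ℂ) := by
    have : s ^ 2 = ρ j t := Real.sq_sqrt hr.le
    exact_mod_cast this
  have hc0 : (s : ℂ) * E ≠ 0 := mul_ne_zero hs0 hE
  -- LHS factorization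
  have hL : -Complex.I * deriv (b j) t =
      (((deriv (φ j) t : ℝ) : ℂ) +
        ((-(deriv (ρ j) t / (2 * ρ j t)) : ℝ) : ℂ) * Complex.I) * ((s : ℂ) * E) := by
    rw [hb']
    push_cast
    rw [← hs2c]
    field_simp
    linear_combination (-2 : ℂ) * (s : ℂ) ^ 2 * ((deriv (φ j) t : ℝ) : ℂ) * Complex.I_sq
  -- expansion of exponentials
  have hexpand : ∀ θ : ℝ, ((Real.cos θ : ℝ) : ℂ) + ((Real.sin θ : ℝ) : ℂ) * Complex.I =
      Complex.exp (Complex.I * θ) := by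
    intro θ
    rw [mul_comm Complex.I, Complex.exp_mul_I, Complex.ofReal_cos, Complex.ofReal_sin]
  have hdouble : ∀ (x : ℝ) (X : ℂ), X = Complex.exp (Complex.I * x) →
      Complex.exp (Complex.I * ((2 * (x - φ j t) : ℝ) : ℂ)) = X ^ 2 / E ^ 2 := by
    intro x X hX
    rw [hX, hEdef, eq_div_iff (pow_ne_zero 2 hE), sq, sq, ← Complex.exp_add, ← Complex.exp_add,
      ← Complex.exp_add]
    congr 1
    push_cast
    ring
  -- conjugate of b j
  have hconj : (starRingEnd ℂ) ((s : ℂ) * E) = (s : ℂ) * E⁻¹ := by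
    rw [map_mul, Complex.conj_ofReal]
    congr 1
    rw [← Complex.exp_neg, ← Complex.exp_conj]
    congr 1
    simp
  have habs : (‖(s : ℂ) * E‖ : ℝ) = s := by
    rw [norm_mul, Complex.norm_exp, Complex.norm_real, Real.norm_eq_abs, abs_of_nonneg (Real.sqrt_nonneg _)]
    simp [hEdef, hsdef]
  -- RHS factorization
  have hR : -(‖b j t‖ : ℂ) ^ 2 * b j t
        + 2 * (b (j - 1) t) ^ 2 * (starRingEnd ℂ) (b j t)
        + 2 * (b (j + 1) t) ^ 2 * (starRingEnd ℂ) (b j t) =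
      (((-ρ j t + 2 * ρ (j - 1) t * Real.cos (2 * (φ (j - 1) t - φ j t))
          + 2 * ρ (j + 1) t * Real.cos (2 * (φ (j + 1) t - φ j t)) : ℝ) : ℂ) +
        ((2 * ρ (j - 1) t * Real.sin (2 * (φ (j - 1) t - φ j t))
          + 2 * ρ (j + 1) t * Real.sin (2 * (φ (j + 1) t - φ j t)) : ℝ) : ℂ) * Complex.I) *
        ((s : ℂ) * E) := by
    have hB : (((-ρ j t + 2 * ρ (j - 1) t * Real.cos (2 * (φ (j - 1) t - φ j t))
          + 2 * ρ (j + 1) t * Real.cos (2 * (φ (j + 1) t - φ j t)) : ℝ) : ℂ) +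
        ((2 * ρ (j - 1) t * Real.sin (2 * (φ (j - 1) t - φ j t))
          + 2 * ρ (j + 1) t * Real.sin (2 * (φ (j + 1) t - φ j t)) : ℝ) : ℂ) * Complex.I) =
        -(ρ j t : ℂ) +
          2 * (ρ (j - 1) t : ℂ) * Complex.exp (Complex.I * ((2 * (φ (j - 1) t - φ j t) : ℝ) : ℂ)) +
          2 * (ρ (j + 1) t : ℂ) *
            Complex.exp (Complex.I * ((2 * (φ (j + 1) t - φ j t) : ℝ) : ℂ)) := by
      rw [← hexpand, ← hexpand]
      push_cast
      ring
    rw [hb j t, hb (j - 1) t, hb (j + 1) t, ← hsdef, ← hEdef, ← hEmdef, ← hEpdef, hconj, habs, hB,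
      hdouble (φ (j - 1) t) Em hEmdef, hdouble (φ (j + 1) t) Ep hEpdef]
    have hm2 : ((Real.sqrt (ρ (j - 1) t) : ℝ) : ℂ) ^ 2 = (ρ (j - 1) t : ℂ) := by
      have : Real.sqrt (ρ (j - 1) t) ^ 2 = ρ (j - 1) t := Real.sq_sqrt hrm
      exact_mod_cast this
    have hp2 : ((Real.sqrt (ρ (j + 1) t) : ℝ) : ℂ) ^ 2 = (ρ (j + 1) t : ℂ) := by
      have : Real.sqrt (ρ (j + 1) t) ^ 2 = ρ (j + 1) t := Real.sq_sqrt hrp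
      exact_mod_cast this
    rw [← hs2c, ← hm2, ← hp2]
    field_simp
  rw [hL, hR, mul_left_inj' hc0, Complex.ext_iff]
  simp only [Complex.add_re, Complex.ofReal_re, Complex.mul_re, Complex.I_re, Complex.ofReal_im,
    Complex.I_im, Complex.add_im, Complex.mul_im]
  constructor
  · rintro ⟨h1, h2⟩
    refine ⟨by linarith, ?_⟩
    have hr0 : ρ j t ≠ 0 := hr.ne'
    field_simp at h2
    linarith
  · rintro ⟨h1, h2⟩
    have hr0 : ρ j t ≠ 0 := hr.ne'
    constructor
    · linarith
    · field_simp
      linarith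
end

section
/- For every N ≥ 1 and every ω ∈ ℝ, there is a unique ρ ∈ ℝ^N satisfying -ρ_j + 2ρ_{j-1} + 2ρ_{j+1} = ω for all j = 1,...,N (with convention ρ_0 = ρ_{N+1} = 0). -/
/-- Extension of `ρ : Fin N → ℝ` to `ℕ` (indexed `1,…,N`), by zero outside. -/
def extProfile (N : ℕ) (ρ : Fin N → ℝ) (k : ℕ) : ℝ :=
  if h : 1 ≤ k ∧ k ≤ N then ρ ⟨k - 1, by omega⟩ else 0

lemma extProfile_add (N : ℕ) (ρ σ : Fin N → ℝ) (k : ℕ) :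
    extProfile N (ρ + σ) k = extProfile N ρ k + extProfile N σ k := by
  unfold extProfile; split <;> simp

lemma extProfile_smul (N : ℕ) (c : ℝ) (ρ : Fin N → ℝ) (k : ℕ) :
    extProfile N (c • ρ) k = c * extProfile N ρ k := by
  unfold extProfile; split <;> simp

def bseq : ℕ → ℤ
  | 0 => 0
  | 1 => 1
  | n+2 => bseq (n+1) - 4 * bseq n

lemma bseq_odd (n : ℕ) : Odd (bseq (n+1)) := by
  induction n using Nat.strong_induction_on with
  | _ n ih =>
    match n with
    | 0 => exact ⟨0, rfl⟩
    | 1 => exact ⟨0, rfl⟩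
    | (m+2) =>
      have h := ih (m+1) (by omega)
      show Odd (bseq ((m+1)+2))
      rw [bseq]
      exact h.sub_even ((by decide : Even (4:ℤ)).mul_right _)

noncomputable def aseq : ℕ → ℝ
  | 0 => 0
  | 1 => 1
  | n+2 => aseq (n+1) / 2 - aseq n

lemma aseq_eq (n : ℕ) : (2:ℝ)^n * aseq (n+1) = (bseq (n+1) : ℝ) := by
  induction n using Nat.strong_induction_on with
  | _ n ih =>
    match n with
    | 0 => norm_num [aseq, bseq]
    | 1 => norm_num [show aseq 2 = aseq 1 / 2 - aseq 0 from rfl, aseq,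
        show bseq 2 = bseq 1 - 4 * bseq 0 from rfl, bseq]
    | (m+2) =>
      have h1 := ih (m+1) (by omega)
      have h2 := ih m (by omega)
      show (2:ℝ)^(m+2) * aseq ((m+1)+2) = ((bseq ((m+1)+2) : ℤ) : ℝ)
      rw [aseq, bseq]
      push_cast
      linear_combination h1 - 4 * h2

lemma aseq_ne (n : ℕ) : aseq (n+1) ≠ 0 := by
  intro h0
  have h := aseq_eq n
  rw [h0, mul_zero] at h
  have hb : bseq (n+1) = 0 := by exact_mod_cast h.symm
  have := bseq_odd n
  rw [hb] at this
  simp at this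

lemma hom_zero (N : ℕ) (ρ : Fin N → ℝ)
    (h : ∀ j ∈ Finset.Icc 1 N,
      -extProfile N ρ j + 2 * extProfile N ρ (j - 1) + 2 * extProfile N ρ (j + 1) = 0) :
    ρ = 0 := by
  set e := extProfile N ρ with he
  have key : ∀ k, k ≤ N + 1 → e k = e 1 * aseq k := by
    intro k
    induction k using Nat.strong_induction_on with
    | _ k ih =>
      match k with
      | 0 => intro _; simp [he, extProfile, aseq]
      | 1 => intro _; simp [aseq]
      | (m+2) =>
        intro hk
        have hj := h (m+1) (by simp [Finset.mem_Icc]; omega)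
        have e1 := ih (m+1) (by omega) (by omega)
        have e0 := ih m (by omega) (by omega)
        have hsub : (m+1) - 1 = m := by omega
        rw [hsub] at hj
        have hrec : e (m+2) = e (m+1)/2 - e m := by
          have : -e (m+1) + 2 * e m + 2 * e (m+1+1) = 0 := hj
          have h2 : (m+1+1) = m+2 := rfl
          rw [h2] at this
          linarith
        rw [hrec, e1, e0, show aseq (m+2) = aseq (m+1)/2 - aseq m from rfl]
        ring
  have hb : e (N+1) = 0 := by simp [he, extProfile]
  have hNb := key (N+1) le_rfl
  have h1 : e 1 = 0 := by
    rw [hb] at hNb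
    rcases mul_eq_zero.mp hNb.symm with h | h
    · exact h
    · exact absurd h (aseq_ne N)
  funext i
  have hi : ρ i = e (i.val + 1) := by
    simp only [he, extProfile]
    rw [dif_pos ⟨by omega, by omega⟩]
    congr 1
  have := key (i.val + 1) (by omega)
  rw [h1, zero_mul] at this
  simpa [hi] using this

noncomputable def Lmap (N : ℕ) : (Fin N → ℝ) →ₗ[ℝ] (Fin N → ℝ) where
  toFun ρ := fun i =>
    -extProfile N ρ (i.val + 1) + 2 * extProfile N ρ i.val + 2 * extProfile N ρ (i.val + 2)
  map_add' ρ σ := by funext i; simp [extProfile_add]; ring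
  map_smul' c ρ := by funext i; simp [extProfile_smul]; ring

lemma Lmap_inj (N : ℕ) : Function.Injective (Lmap N) := by
  rw [injective_iff_map_eq_zero]
  intro ρ hρ
  apply hom_zero N ρ
  intro j hj
  simp only [Finset.mem_Icc] at hj
  have := congrFun hρ ⟨j - 1, by omega⟩
  simp only [Lmap, LinearMap.coe_mk, AddHom.coe_mk, Pi.zero_apply] at this
  have h1 : j - 1 + 1 = j := by omega
  have h2 : j - 1 + 2 = j + 1 := by omega
  rw [h1, h2] at this
  linarith [this]

/-- For every `N ≥ 1` and every `ω`, there is a unique `ρ ∈ ℝ^N` with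
`-ρ_j + 2ρ_{j-1} + 2ρ_{j+1} = ω` for `j = 1,…,N` (with `ρ_0 = ρ_{N+1} = 0`). -/
theorem phase_locked_exists_unique (N : ℕ) (hN : 1 ≤ N) (ω : ℝ) :
    ∃! ρ : Fin N → ℝ,
      ∀ j ∈ Finset.Icc 1 N,
        -extProfile N ρ j + 2 * extProfile N ρ (j - 1)
          + 2 * extProfile N ρ (j + 1) = ω := by
  have hsurj : Function.Surjective (Lmap N) :=
    (LinearMap.injective_iff_surjective).mp (Lmap_inj N)
  obtain ⟨ρ, hρ⟩ := hsurj (fun _ => ω)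
  refine ⟨ρ, ?_, ?_⟩
  · intro j hj
    simp only [Finset.mem_Icc] at hj
    have := congrFun hρ ⟨j - 1, by omega⟩
    simp only [Lmap, LinearMap.coe_mk, AddHom.coe_mk] at this
    have h1 : j - 1 + 1 = j := by omega
    have h2 : j - 1 + 2 = j + 1 := by omega
    rw [h1, h2] at this
    linarith [this]
  · intro σ hσ
    apply Lmap_inj N
    rw [hρ]
    funext i
    have := hσ (i.val + 1) (by simp [Finset.mem_Icc])
    simp only [Nat.add_sub_cancel] at this
    simp only [Lmap, LinearMap.coe_mk, AddHom.coe_mk]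
    have h2 : i.val + 1 + 1 = i.val + 2 := rfl
    rw [h2] at this
    linarith [this]
end

section
/- If ρ, φ : ℝ → ℝ^N solve the periodic hydrodynamic Toy Model system (indices mod N) and initially ρ_{j+1}(0) = ρ_{j-1}(0) and φ_{j+1}(0) = φ_{j-1}(0) for all j, then ρ_{j+1}(t) = ρ_{j-1}(t) and φ_{j+1}(t) = φ_{j-1}(t) for all t and all j. -/
open Set Real

lemma my_abs_sin_sub_sin (u u' : ℝ) : |Real.sin u - Real.sin u'| ≤ |u - u'| := by
  rw [Real.sin_sub_sin]
  calc |2 * Real.sin ((u - u')/2) * Real.cos ((u + u')/2)|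
      = 2 * |Real.sin ((u - u')/2)| * |Real.cos ((u + u')/2)| := by
        rw [abs_mul, abs_mul, abs_two]
    _ ≤ 2 * |(u - u')/2| * 1 :=
        mul_le_mul (mul_le_mul_of_nonneg_left Real.abs_sin_le_abs (by norm_num))
          (Real.abs_cos_le_one _) (abs_nonneg _) (by positivity)
    _ = |u - u'| := by rw [mul_one, abs_div, abs_two]; ring

lemma my_abs_cos_sub_cos (u u' : ℝ) : |Real.cos u - Real.cos u'| ≤ |u - u'| := by
  rw [Real.cos_sub_cos]
  calc |(-2) * Real.sin ((u + u')/2) * Real.sin ((u - u')/2)|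
      = 2 * |Real.sin ((u + u')/2)| * |Real.sin ((u - u')/2)| := by
        rw [abs_mul, abs_mul, abs_neg, abs_two]
    _ ≤ 2 * 1 * |(u - u')/2| :=
        mul_le_mul (mul_le_mul_of_nonneg_left (Real.abs_sin_le_one _) (by norm_num))
          Real.abs_sin_le_abs (abs_nonneg _) (by norm_num)
    _ = |u - u'| := by rw [mul_one, abs_div, abs_two]; ring

lemma abs_mul_le' {a b A B : ℝ} (ha : |a| ≤ A) (hb : |b| ≤ B) : |a * b| ≤ A * B := by
  rw [abs_mul]
  exact mul_le_mul ha hb (abs_nonneg _) ((abs_nonneg a).trans ha)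

lemma sin_prod_est {M x x' y y' u u' : ℝ} (hx' : |x'| ≤ M) (hy : |y| ≤ M) (hy' : |y'| ≤ M) :
    |x * y * Real.sin u - x' * y' * Real.sin u'| ≤
      M * |x - x'| + M * |y - y'| + M * M * |u - u'| := by
  have key : x * y * Real.sin u - x' * y' * Real.sin u' =
      (x - x') * (y * Real.sin u) + (x' * (y - y')) * Real.sin u
        + (x' * y') * (Real.sin u - Real.sin u') := by ring
  rw [key]
  have h1 : |(x - x') * (y * Real.sin u)| ≤ |x - x'| * M :=
    abs_mul_le' le_rfl (by simpa using abs_mul_le' hy (Real.abs_sin_le_one u))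
  have h2 : |(x' * (y - y')) * Real.sin u| ≤ M * |y - y'| := by
    simpa using abs_mul_le' (abs_mul_le' hx' le_rfl) (Real.abs_sin_le_one u)
  have h3 : |(x' * y') * (Real.sin u - Real.sin u')| ≤ M * M * |u - u'| :=
    abs_mul_le' (abs_mul_le' hx' hy') (my_abs_sin_sub_sin u u')
  calc _ ≤ |(x - x') * (y * Real.sin u)| + |(x' * (y - y')) * Real.sin u|
        + |(x' * y') * (Real.sin u - Real.sin u')| := abs_add_three _ _ _
    _ ≤ _ := by rw [mul_comm |x - x'| M] at h1; linarith

lemma cos_prod_est {M x x' u u' : ℝ} (hx' : |x'| ≤ M) :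
    |x * Real.cos u - x' * Real.cos u'| ≤ |x - x'| + M * |u - u'| := by
  have key : x * Real.cos u - x' * Real.cos u' =
      (x - x') * Real.cos u + x' * (Real.cos u - Real.cos u') := by ring
  rw [key]
  have h1 : |(x - x') * Real.cos u| ≤ |x - x'| := by
    simpa using abs_mul_le' (le_refl |x - x'|) (Real.abs_cos_le_one u)
  have h2 : |x' * (Real.cos u - Real.cos u')| ≤ M * |u - u'| :=
    abs_mul_le' hx' (my_abs_cos_sub_cos u u')
  exact (abs_add_le _ _).trans (by linarith)

/-- Core Gronwall-type lemma: a differentiable function vanishing at 0 whose derivative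
is locally norm-controlled by the function itself vanishes identically. -/
lemma zero_of_norm_deriv_le {E : Type*} [NormedAddCommGroup E] [NormedSpace ℝ E]
    {f : ℝ → E} (hf : Differentiable ℝ f) (h0 : f 0 = 0)
    (hK : ∀ T : ℝ, 0 < T → ∃ K : ℝ, ∀ t ∈ Set.Icc (-T) T, ‖deriv f t‖ ≤ K * ‖f t‖) :
    ∀ t, f t = 0 := by
  intro t
  set T : ℝ := |t| + 1 with hT
  have hTpos : 0 < T := by positivity
  obtain ⟨K, hKb⟩ := hK T hTpos
  -- forward
  have fwd : ∀ x ∈ Icc (0:ℝ) T, ‖f x‖ ≤ gronwallBound 0 K 0 (x - 0) := by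
    apply norm_le_gronwallBound_of_norm_deriv_right_le
      (f' := fun s => deriv f s) hf.continuous.continuousOn
    · intro x _
      exact (hf x).hasDerivAt.hasDerivWithinAt
    · simp [h0]
    · intro x hx
      have hx' : x ∈ Icc (-T) T := ⟨by linarith [hx.1], le_of_lt hx.2⟩
      simpa using hKb x hx'
  -- backward
  have bwd : ∀ x ∈ Icc (0:ℝ) T, ‖f (-x)‖ ≤ gronwallBound 0 K 0 (x - 0) := by
    apply norm_le_gronwallBound_of_norm_deriv_right_le
      (f := fun s => f (-s)) (f' := fun s => -deriv f (-s))
      (hf.continuous.comp continuous_neg).continuousOn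
    · intro x _
      have : HasDerivAt (fun s => f (-s)) ((-1 : ℝ) • deriv f (-x)) x :=
        (hf (-x)).hasDerivAt.scomp x (hasDerivAt_neg x)
      simpa using this.hasDerivWithinAt
    · simp [h0]
    · intro x hx
      have hx' : -x ∈ Icc (-T) T := ⟨by linarith [hx.2], by linarith [hx.1]⟩
      simpa using hKb (-x) hx'
  have hb : gronwallBound (0:ℝ) K 0 (|t| - 0) = 0 := by
    rw [gronwallBound_ε0]; simp
  rcases le_or_gt 0 t with h | h
  · have ht : t ∈ Icc (0:ℝ) T := ⟨h, (le_abs_self t).trans (by rw [hT]; linarith)⟩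
    simpa [gronwallBound_ε0] using fwd t ht
  · have ht : -t ∈ Icc (0:ℝ) T := ⟨by linarith, (neg_le_abs t).trans (by rw [hT]; linarith)⟩
    simpa [gronwallBound_ε0] using bwd (-t) ht

/-- For the periodic hydrodynamic Toy Model (indices mod `N`), the symmetry
`ρ_{j+1} = ρ_{j-1}`, `φ_{j+1} = φ_{j-1}` is preserved under the flow. -/
theorem periodic_hydro_symmetry_preserved (N : ℕ) [NeZero N]
    (ρ φ : ZMod N → ℝ → ℝ)
    (hρdiff : ∀ j, Differentiable ℝ (ρ j)) (hφdiff : ∀ j, Differentiable ℝ (φ j))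
    (hρC1 : ∀ j, Continuous (deriv (ρ j))) (hφC1 : ∀ j, Continuous (deriv (φ j)))
    (hφode : ∀ j, ∀ t : ℝ,
      deriv (φ j) t =
        -ρ j t + 2 * ρ (j - 1) t * Real.cos (2 * (φ (j - 1) t - φ j t))
          + 2 * ρ (j + 1) t * Real.cos (2 * (φ (j + 1) t - φ j t)))
    (hρode : ∀ j, ∀ t : ℝ,
      deriv (ρ j) t =
        -4 * ρ j t * ρ (j - 1) t * Real.sin (2 * (φ (j - 1) t - φ j t))
          - 4 * ρ j t * ρ (j + 1) t * Real.sin (2 * (φ (j + 1) t - φ j t)))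
    (hρ0 : ∀ j, ρ (j + 1) 0 = ρ (j - 1) 0)
    (hφ0 : ∀ j, φ (j + 1) 0 = φ (j - 1) 0) :
    ∀ j, ∀ t : ℝ, ρ (j + 1) t = ρ (j - 1) t ∧ φ (j + 1) t = φ (j - 1) t := by
  classical
  set F : ℝ → (ZMod N → ℝ) × (ZMod N → ℝ) :=
    fun t => (fun j => ρ (j + 2) t - ρ j t, fun j => φ (j + 2) t - φ j t) with hF
  have hF' : ∀ t, HasDerivAt F
      ((fun j => deriv (ρ (j + 2)) t - deriv (ρ j) t,
        fun j => deriv (φ (j + 2)) t - deriv (φ j) t)) t := by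
    intro t
    rw [hF]
    exact HasDerivAt.prodMk
      (hasDerivAt_pi.2 fun j => ((hρdiff (j + 2) t).hasDerivAt.sub (hρdiff j t).hasDerivAt))
      (hasDerivAt_pi.2 fun j => ((hφdiff (j + 2) t).hasDerivAt.sub (hφdiff j t).hasDerivAt))
  have hFdiff : Differentiable ℝ F := fun t => (hF' t).differentiableAt
  have hF0 : F 0 = 0 := by
    rw [hF]
    refine Prod.ext ?_ ?_ <;> funext j <;> simp only [Pi.zero_apply, Prod.fst_zero, Prod.snd_zero]
    · have h := hρ0 (j + 1)
      rw [show (j : ZMod N) + 1 + 1 = j + 2 by ring, show (j : ZMod N) + 1 - 1 = j by ring] at h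
      simp [h]
    · have h := hφ0 (j + 1)
      rw [show (j : ZMod N) + 1 + 1 = j + 2 by ring, show (j : ZMod N) + 1 - 1 = j by ring] at h
      simp [h]
  have key : ∀ t, F t = 0 := by
    apply zero_of_norm_deriv_le hFdiff hF0
    intro T hT
    obtain ⟨C, hC⟩ := (isCompact_Icc : IsCompact (Icc (-T) T)).exists_bound_of_continuousOn
      (f := fun t (j : ZMod N) => ρ j t)
      (continuous_pi fun j => (hρdiff j).continuous).continuousOn
    set M := max C 0 with hMdef
    have hM0 : (0:ℝ) ≤ M := le_max_right _ _
    have hMb : ∀ (j : ZMod N), ∀ s ∈ Icc (-T) T, |ρ j s| ≤ M := by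
      intro j s hs
      calc |ρ j s| = ‖(fun (j : ZMod N) => ρ j s) j‖ := rfl
        _ ≤ ‖fun (j : ZMod N) => ρ j s‖ := norm_le_pi_norm (fun j : ZMod N => ρ j s) j
        _ ≤ C := hC s hs
        _ ≤ M := le_max_left _ _
    refine ⟨5 + 32 * M + 32 * (M * M), ?_⟩
    intro t ht
    set n := ‖F t‖ with hn
    have hn0 : (0:ℝ) ≤ n := norm_nonneg _
    have hρd : ∀ k : ZMod N, |ρ (k + 2) t - ρ k t| ≤ n := by
      intro k
      have e : |ρ (k + 2) t - ρ k t| = ‖(F t).1 k‖ := by simp [hF]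
      rw [e]; exact (norm_le_pi_norm _ k).trans (norm_fst_le _)
    have hφd : ∀ k : ZMod N, |φ (k + 2) t - φ k t| ≤ n := by
      intro k
      have e : |φ (k + 2) t - φ k t| = ‖(F t).2 k‖ := by simp [hF]
      rw [e]; exact (norm_le_pi_norm _ k).trans (norm_snd_le _)
    rw [(hF' t).deriv, norm_prod_le_iff]
    have hKn : (0:ℝ) ≤ (5 + 32 * M + 32 * (M * M)) * n := by positivity
    have hMn : (0:ℝ) ≤ M * n := mul_nonneg hM0 hn0
    have hMMn : (0:ℝ) ≤ M * M * n := mul_nonneg (mul_nonneg hM0 hM0) hn0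
    constructor
    · rw [pi_norm_le_iff_of_nonneg hKn]
      intro j
      rw [Real.norm_eq_abs]
      show |deriv (ρ (j + 2)) t - deriv (ρ j) t| ≤ (5 + 32 * M + 32 * (M * M)) * n
      have e2 := hρode (j + 2) t
      rw [show (j : ZMod N) + 2 - 1 = j + 1 by ring,
          show (j : ZMod N) + 2 + 1 = j + 3 by ring] at e2
      rw [e2, hρode j t]
      have hbM : |ρ (j + 1) t| ≤ M := hMb _ t ht
      have hyM : |ρ (j - 1) t| ≤ M := hMb _ t ht
      have hcM : |ρ (j + 3) t| ≤ M := hMb _ t ht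
      have hxM : |ρ j t| ≤ M := hMb _ t ht
      have hax : |ρ (j + 2) t - ρ j t| ≤ n := hρd j
      have hby : |ρ (j + 1) t - ρ (j - 1) t| ≤ n := by
        have := hρd (j - 1); rwa [show (j : ZMod N) - 1 + 2 = j + 1 by ring] at this
      have hcb : |ρ (j + 3) t - ρ (j + 1) t| ≤ n := by
        have := hρd (j + 1); rwa [show (j : ZMod N) + 1 + 2 = j + 3 by ring] at this
      have hP : |φ (j + 2) t - φ j t| ≤ n := hφd j
      have hQ : |φ (j + 1) t - φ (j - 1) t| ≤ n := by
        have := hφd (j - 1); rwa [show (j : ZMod N) - 1 + 2 = j + 1 by ring] at this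
      have hR : |φ (j + 3) t - φ (j + 1) t| ≤ n := by
        have := hφd (j + 1); rwa [show (j : ZMod N) + 1 + 2 = j + 3 by ring] at this
      have hu13 : |2 * (φ (j + 1) t - φ (j + 2) t) - 2 * (φ (j - 1) t - φ j t)| ≤ 4 * n := by
        rw [abs_le] at hP hQ ⊢; constructor <;> [linarith [hP.1, hP.2, hQ.1, hQ.2];
          linarith [hP.1, hP.2, hQ.1, hQ.2]]
      have hu24 : |2 * (φ (j + 3) t - φ (j + 2) t) - 2 * (φ (j + 1) t - φ j t)| ≤ 4 * n := by
        rw [abs_le] at hP hR ⊢; constructor <;> [linarith [hP.1, hP.2, hR.1, hR.2];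
          linarith [hP.1, hP.2, hR.1, hR.2]]
      have hE1 := sin_prod_est (x := ρ (j + 2) t) (u := 2 * (φ (j + 1) t - φ (j + 2) t))
        (u' := 2 * (φ (j - 1) t - φ j t)) hxM hbM hyM
      have hE2 := sin_prod_est (x := ρ (j + 2) t) (u := 2 * (φ (j + 3) t - φ (j + 2) t))
        (u' := 2 * (φ (j + 1) t - φ j t)) hxM hcM hbM
      set E1 := ρ (j + 2) t * ρ (j + 1) t * Real.sin (2 * (φ (j + 1) t - φ (j + 2) t))
        - ρ j t * ρ (j - 1) t * Real.sin (2 * (φ (j - 1) t - φ j t)) with hE1def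
      set E2 := ρ (j + 2) t * ρ (j + 3) t * Real.sin (2 * (φ (j + 3) t - φ (j + 2) t))
        - ρ j t * ρ (j + 1) t * Real.sin (2 * (φ (j + 1) t - φ j t)) with hE2def
      have kform : -4 * ρ (j + 2) t * ρ (j + 1) t * Real.sin (2 * (φ (j + 1) t - φ (j + 2) t))
          - 4 * ρ (j + 2) t * ρ (j + 3) t * Real.sin (2 * (φ (j + 3) t - φ (j + 2) t))
          - (-4 * ρ j t * ρ (j - 1) t * Real.sin (2 * (φ (j - 1) t - φ j t))
            - 4 * ρ j t * ρ (j + 1) t * Real.sin (2 * (φ (j + 1) t - φ j t)))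
          = (-4) * E1 + (-4) * E2 := by rw [hE1def, hE2def]; ring
      rw [kform]
      have tri : |(-4) * E1 + (-4) * E2| ≤ 4 * |E1| + 4 * |E2| := by
        have h := abs_add_le ((-4) * E1) ((-4) * E2)
        rw [abs_mul, abs_mul] at h
        norm_num at h ⊢
        linarith
      have b1 : M * |ρ (j + 2) t - ρ j t| ≤ M * n := mul_le_mul_of_nonneg_left hax hM0
      have b2 : M * |ρ (j + 1) t - ρ (j - 1) t| ≤ M * n := mul_le_mul_of_nonneg_left hby hM0
      have b3 : M * M * |2 * (φ (j + 1) t - φ (j + 2) t) - 2 * (φ (j - 1) t - φ j t)|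
          ≤ 4 * (M * M * n) := by
        calc _ ≤ M * M * (4 * n) :=
              mul_le_mul_of_nonneg_left hu13 (mul_nonneg hM0 hM0)
          _ = 4 * (M * M * n) := by ring
      have b4 : M * |ρ (j + 3) t - ρ (j + 1) t| ≤ M * n := mul_le_mul_of_nonneg_left hcb hM0
      have b5 : M * M * |2 * (φ (j + 3) t - φ (j + 2) t) - 2 * (φ (j + 1) t - φ j t)|
          ≤ 4 * (M * M * n) := by
        calc _ ≤ M * M * (4 * n) :=
              mul_le_mul_of_nonneg_left hu24 (mul_nonneg hM0 hM0)
          _ = 4 * (M * M * n) := by ring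
      have expand : (5 + 32 * M + 32 * (M * M)) * n = 5 * n + 32 * (M * n) + 32 * (M * M * n) := by
        ring
      rw [expand]
      linarith
    · rw [pi_norm_le_iff_of_nonneg hKn]
      intro j
      rw [Real.norm_eq_abs]
      show |deriv (φ (j + 2)) t - deriv (φ j) t| ≤ (5 + 32 * M + 32 * (M * M)) * n
      have e2 := hφode (j + 2) t
      rw [show (j : ZMod N) + 2 - 1 = j + 1 by ring,
          show (j : ZMod N) + 2 + 1 = j + 3 by ring] at e2
      rw [e2, hφode j t]
      have hbM : |ρ (j + 1) t| ≤ M := hMb _ t ht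
      have hyM : |ρ (j - 1) t| ≤ M := hMb _ t ht
      have hax : |ρ (j + 2) t - ρ j t| ≤ n := hρd j
      have hby : |ρ (j + 1) t - ρ (j - 1) t| ≤ n := by
        have := hρd (j - 1); rwa [show (j : ZMod N) - 1 + 2 = j + 1 by ring] at this
      have hcb : |ρ (j + 3) t - ρ (j + 1) t| ≤ n := by
        have := hρd (j + 1); rwa [show (j : ZMod N) + 1 + 2 = j + 3 by ring] at this
      have hP : |φ (j + 2) t - φ j t| ≤ n := hφd j
      have hQ : |φ (j + 1) t - φ (j - 1) t| ≤ n := by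
        have := hφd (j - 1); rwa [show (j : ZMod N) - 1 + 2 = j + 1 by ring] at this
      have hR : |φ (j + 3) t - φ (j + 1) t| ≤ n := by
        have := hφd (j + 1); rwa [show (j : ZMod N) + 1 + 2 = j + 3 by ring] at this
      have hu13 : |2 * (φ (j + 1) t - φ (j + 2) t) - 2 * (φ (j - 1) t - φ j t)| ≤ 4 * n := by
        rw [abs_le] at hP hQ ⊢; constructor <;> [linarith [hP.1, hP.2, hQ.1, hQ.2];
          linarith [hP.1, hP.2, hQ.1, hQ.2]]
      have hu24 : |2 * (φ (j + 3) t - φ (j + 2) t) - 2 * (φ (j + 1) t - φ j t)| ≤ 4 * n := by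
        rw [abs_le] at hP hR ⊢; constructor <;> [linarith [hP.1, hP.2, hR.1, hR.2];
          linarith [hP.1, hP.2, hR.1, hR.2]]
      have hE1 := cos_prod_est (x := ρ (j + 1) t) (u := 2 * (φ (j + 1) t - φ (j + 2) t))
        (u' := 2 * (φ (j - 1) t - φ j t)) hyM
      have hE2 := cos_prod_est (x := ρ (j + 3) t) (u := 2 * (φ (j + 3) t - φ (j + 2) t))
        (u' := 2 * (φ (j + 1) t - φ j t)) hbM
      set E1 := ρ (j + 1) t * Real.cos (2 * (φ (j + 1) t - φ (j + 2) t))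
        - ρ (j - 1) t * Real.cos (2 * (φ (j - 1) t - φ j t)) with hE1def
      set E2 := ρ (j + 3) t * Real.cos (2 * (φ (j + 3) t - φ (j + 2) t))
        - ρ (j + 1) t * Real.cos (2 * (φ (j + 1) t - φ j t)) with hE2def
      set D := ρ (j + 2) t - ρ j t with hDdef
      have kform : -ρ (j + 2) t + 2 * ρ (j + 1) t * Real.cos (2 * (φ (j + 1) t - φ (j + 2) t))
          + 2 * ρ (j + 3) t * Real.cos (2 * (φ (j + 3) t - φ (j + 2) t))
          - (-ρ j t + 2 * ρ (j - 1) t * Real.cos (2 * (φ (j - 1) t - φ j t))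
            + 2 * ρ (j + 1) t * Real.cos (2 * (φ (j + 1) t - φ j t)))
          = -D + 2 * E1 + 2 * E2 := by rw [hE1def, hE2def, hDdef]; ring
      rw [kform]
      have tri : |-D + 2 * E1 + 2 * E2| ≤ |D| + 2 * |E1| + 2 * |E2| := by
        have h := abs_add_three (-D) (2 * E1) (2 * E2)
        rw [abs_neg, abs_mul, abs_mul] at h
        norm_num at h ⊢
        linarith
      have b2 : M * |2 * (φ (j + 1) t - φ (j + 2) t) - 2 * (φ (j - 1) t - φ j t)|
          ≤ 4 * (M * n) := by
        calc _ ≤ M * (4 * n) := mul_le_mul_of_nonneg_left hu13 hM0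
          _ = 4 * (M * n) := by ring
      have b4 : M * |2 * (φ (j + 3) t - φ (j + 2) t) - 2 * (φ (j + 1) t - φ j t)|
          ≤ 4 * (M * n) := by
        calc _ ≤ M * (4 * n) := mul_le_mul_of_nonneg_left hu24 hM0
          _ = 4 * (M * n) := by ring
      have expand : (5 + 32 * M + 32 * (M * M)) * n = 5 * n + 32 * (M * n) + 32 * (M * M * n) := by
        ring
      rw [expand]
      linarith
  have hcomp : ∀ (k : ZMod N) (t : ℝ), ρ (k + 2) t = ρ k t ∧ φ (k + 2) t = φ k t := by
    intro k t
    have h := key t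
    have h1 := congrFun (congrArg Prod.fst h) k
    have h2 := congrFun (congrArg Prod.snd h) k
    simp only [hF, Prod.fst_zero, Prod.snd_zero, Pi.zero_apply, sub_eq_zero] at h1 h2
    exact ⟨h1, h2⟩
  intro j t
  have h := hcomp (j - 1) t
  rwa [show (j : ZMod N) - 1 + 2 = j + 1 by ring] at h
end

section
/- For the reduced two-variable system Δφ' = -Δρ·(1 + 4·cos(2Δφ)), Δρ' = 4·(r² - Δρ²)·sin(2Δφ) with constant parameter r, the quantity H = (1/2)·(1 + 4·cos(2Δφ))·(r² - Δρ²) is conserved along solutions. -/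
/-- The quantity `H = (1/2)(1 + 4cos(2Δφ))(r² - Δρ²)` is conserved along
solutions of `Δφ' = -Δρ(1 + 4cos(2Δφ))`, `Δρ' = 4(r² - Δρ²) sin(2Δφ)`. -/
theorem reduced_system_energy_conserved (r : ℝ) (dφ dρ : ℝ → ℝ)
    (hφdiff : Differentiable ℝ dφ) (hρdiff : Differentiable ℝ dρ)
    (hφode : ∀ t, deriv dφ t = -dρ t * (1 + 4 * Real.cos (2 * dφ t)))
    (hρode : ∀ t, deriv dρ t = 4 * (r ^ 2 - dρ t ^ 2) * Real.sin (2 * dφ t)) :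
    ∀ s t : ℝ,
      (1 / 2) * (1 + 4 * Real.cos (2 * dφ s)) * (r ^ 2 - dρ s ^ 2) =
        (1 / 2) * (1 + 4 * Real.cos (2 * dφ t)) * (r ^ 2 - dρ t ^ 2) := by
  have key : ∀ t, HasDerivAt
      (fun t => (1 / 2) * (1 + 4 * Real.cos (2 * dφ t)) * (r ^ 2 - dρ t ^ 2)) 0 t := by
    intro t
    have hφ : HasDerivAt dφ (-dρ t * (1 + 4 * Real.cos (2 * dφ t))) t := by
      rw [← hφode t]; exact (hφdiff t).hasDerivAt
    have hρ : HasDerivAt dρ (4 * (r ^ 2 - dρ t ^ 2) * Real.sin (2 * dφ t)) t := by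
      rw [← hρode t]; exact (hρdiff t).hasDerivAt
    have hcos : HasDerivAt (fun t => Real.cos (2 * dφ t))
        (-Real.sin (2 * dφ t) * (2 * (-dρ t * (1 + 4 * Real.cos (2 * dφ t))))) t :=
      (Real.hasDerivAt_cos _).comp t ((hφ.const_mul 2))
    have h := (((hcos.const_mul 4).const_add 1).const_mul (1/2 : ℝ)).mul
      ((hρ.pow 2).const_sub (r ^ 2))
    refine h.congr_deriv ?_
    simp only [Nat.cast_ofNat, Pi.pow_apply, Nat.reduceSub, pow_one]
    ring
  intro s t
  exact is_const_of_deriv_eq_zero (fun x => (key x).differentiableAt)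
    (fun x => (key x).deriv) s t
end

section
/- For the reduced two-variable system, the dynamics are Hamiltonian: with H(Δφ, Δρ) = (1/2)·(1 + 4·cos(2Δφ))·(r² - Δρ²), one has ∂H/∂Δρ = -Δρ·(1 + 4·cos(2Δφ)) and -∂H/∂Δφ = 4·(r² - Δρ²)·sin(2Δφ). -/
/-- With `H(x, y) = (1/2)(1 + 4cos(2x))(r² - y²)`, the reduced system is
Hamiltonian: `∂H/∂y = -y(1 + 4cos(2x))` and `-∂H/∂x = 4(r² - y²) sin(2x)`. -/
theorem reduced_system_hamiltonian_structure (r : ℝ)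
    (H : ℝ → ℝ → ℝ)
    (hH : ∀ x y, H x y = (1 / 2) * (1 + 4 * Real.cos (2 * x)) * (r ^ 2 - y ^ 2)) :
    ∀ x y : ℝ,
      deriv (fun y' => H x y') y = -y * (1 + 4 * Real.cos (2 * x)) ∧
      -deriv (fun x' => H x' y) x = 4 * (r ^ 2 - y ^ 2) * Real.sin (2 * x) := by
  intro x y
  constructor
  · have : (fun y' => H x y') = fun y' => (1 / 2) * (1 + 4 * Real.cos (2 * x)) * (r ^ 2 - y' ^ 2) := by
      funext y'; exact hH x y'
    rw [this]
    have h : HasDerivAt (fun y' : ℝ => (1 / 2) * (1 + 4 * Real.cos (2 * x)) * (r ^ 2 - y' ^ 2))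
        ((1 / 2) * (1 + 4 * Real.cos (2 * x)) * -((2:ℕ) * y ^ (2-1))) y :=
      ((hasDerivAt_pow 2 y).const_sub (r ^ 2)).const_mul _
    rw [h.deriv]; push_cast; ring
  · have : (fun x' => H x' y) = fun x' => (1 / 2) * (1 + 4 * Real.cos (2 * x')) * (r ^ 2 - y ^ 2) := by
      funext x'; exact hH x' y
    rw [this]
    have hc : HasDerivAt (fun x' : ℝ => Real.cos (2 * x')) (-Real.sin (2 * x) * 2) x := by
      have := (Real.hasDerivAt_cos (2 * x)).comp x ((hasDerivAt_id x).const_mul 2)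
      simpa [Function.comp_def] using this
    have h : HasDerivAt (fun x' : ℝ => (1 / 2) * (1 + 4 * Real.cos (2 * x')) * (r ^ 2 - y ^ 2))
        ((1 / 2) * (4 * (-Real.sin (2 * x) * 2)) * (r ^ 2 - y ^ 2)) x := by
      exact (((hc.const_mul 4).const_add 1).const_mul (1/2)).mul_const _
    rw [h.deriv]; ring
end

section
/- The function U(x) = (2/3)·sin²((1/2)·√(3/2)·x) solves the ODE 2·U'' + 3·U - 1 = 0 on ℝ, and satisfies the first integral (U')² + (3/2)·U² - U = 0. -/
/-- `U(x) = (2/3) sin²((1/2)√(3/2) x)` solves `2U'' + 3U - 1 = 0` and the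
first integral `(U')² + (3/2)U² - U = 0`. -/
theorem compacton_U_solves_ode (U : ℝ → ℝ)
    (hU : ∀ x, U x = (2 / 3) * Real.sin ((1 / 2) * Real.sqrt (3 / 2) * x) ^ 2) :
    ∀ x : ℝ,
      2 * deriv (deriv U) x + 3 * U x - 1 = 0 ∧
      deriv U x ^ 2 + (3 / 2) * U x ^ 2 - U x = 0 := by
  set c : ℝ := (1 / 2) * Real.sqrt (3 / 2) with hc
  have hc2 : c ^ 2 = 3 / 8 := by
    have : Real.sqrt (3 / 2) ^ 2 = 3 / 2 := Real.sq_sqrt (by norm_num)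
    rw [hc]; nlinarith [this]
  have hlin : ∀ x : ℝ, HasDerivAt (fun y : ℝ => c * y) c x := by
    intro x
    simpa using (hasDerivAt_id x).const_mul c
  have hUfun : U = fun y => (2 / 3) * Real.sin (c * y) ^ 2 := funext hU
  have h1 : ∀ x : ℝ,
      HasDerivAt U ((2 / 3) * ((2 : ℕ) * Real.sin (c * x) ^ 1 * (Real.cos (c * x) * c))) x := by
    intro x
    rw [hUfun]
    exact ((((Real.hasDerivAt_sin (c * x)).comp x (hlin x)).pow 2).const_mul (2 / 3))
  have hd1 : deriv U = fun x => (4 * c / 3) * (Real.sin (c * x) * Real.cos (c * x)) := by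
    funext x
    rw [(h1 x).deriv]
    ring
  have h2 : ∀ x : ℝ,
      HasDerivAt (deriv U)
        ((4 * c / 3) * ((Real.cos (c * x) * c) * Real.cos (c * x) +
          Real.sin (c * x) * (-Real.sin (c * x) * c))) x := by
    intro x
    rw [hd1]
    exact ((((Real.hasDerivAt_sin (c * x)).comp x (hlin x)).mul
      ((Real.hasDerivAt_cos (c * x)).comp x (hlin x))).const_mul (4 * c / 3))
  intro x
  have hs := Real.sin_sq_add_cos_sq (c * x)
  rw [(h2 x).deriv, hd1, hU x]
  refine ⟨by nlinarith [hs, hc2], ?_⟩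
  simp only
  linear_combination (16 / 9) * Real.sin (c * x) ^ 2 * Real.cos (c * x) ^ 2 * hc2 +
    (2 / 3) * Real.sin (c * x) ^ 2 * hs
end

section
/- The function Q(x) = √(2/3)·sin((1/2)·√(3/2)·x) satisfies Q = 3·Q³ + 2·Q·(Q²)'' on ℝ. -/
/-- `Q(x) = √(2/3) sin((1/2)√(3/2) x)` satisfies the compacton profile equation
`Q = 3Q³ + 2Q (Q²)''`. -/
theorem compacton_Q_profile_equation (Q : ℝ → ℝ)
    (hQ : ∀ x, Q x = Real.sqrt (2 / 3) * Real.sin ((1 / 2) * Real.sqrt (3 / 2) * x)) :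
    ∀ x : ℝ,
      Q x = 3 * Q x ^ 3 + 2 * Q x * deriv (deriv (fun y => Q y ^ 2)) x := by
  intro x
  set a : ℝ := (1 / 2) * Real.sqrt (3 / 2) with ha
  set c : ℝ := Real.sqrt (2 / 3) with hc
  have hc2 : c ^ 2 = 2 / 3 := Real.sq_sqrt (by norm_num)
  have ha2 : a ^ 2 = 3 / 8 := by
    have : Real.sqrt (3 / 2) ^ 2 = 3 / 2 := Real.sq_sqrt (by norm_num)
    rw [ha]; nlinarith [this]
  have hfun : (fun y => Q y ^ 2) = fun y => c ^ 2 * Real.sin (a * y) ^ 2 := by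
    funext y; rw [hQ y]; ring
  have hlin : ∀ y : ℝ, HasDerivAt (fun y : ℝ => a * y) a y := by
    intro y
    simpa using (hasDerivAt_id y).const_mul a
  have hsin : ∀ y : ℝ, HasDerivAt (fun y : ℝ => Real.sin (a * y))
      (Real.cos (a * y) * a) y := by
    intro y
    exact (Real.hasDerivAt_sin (a * y)).comp y (hlin y)
  have hd1 : ∀ y : ℝ, HasDerivAt (fun y => c ^ 2 * Real.sin (a * y) ^ 2)
      (c ^ 2 * (2 * Real.sin (a * y) * (Real.cos (a * y) * a))) y := by
    intro y
    have := ((hsin y).pow 2).const_mul (c ^ 2)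
    simpa [mul_comm, mul_assoc, mul_left_comm] using this
  have hderiv1 : deriv (fun y => Q y ^ 2)
      = fun y => c ^ 2 * (2 * Real.sin (a * y) * (Real.cos (a * y) * a)) := by
    funext y
    rw [hfun]
    exact (hd1 y).deriv
  have hcos : ∀ y : ℝ, HasDerivAt (fun y : ℝ => Real.cos (a * y))
      (-Real.sin (a * y) * a) y := by
    intro y
    exact (Real.hasDerivAt_cos (a * y)).comp y (hlin y)
  have hd2 : HasDerivAt (fun y => c ^ 2 * (2 * Real.sin (a * y) * (Real.cos (a * y) * a)))
      (c ^ 2 * 2 * a * a * (Real.cos (a * x) ^ 2 - Real.sin (a * x) ^ 2)) x := by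
    have h := (((hsin x).mul (hcos x)).const_mul (c ^ 2 * 2 * a))
    have heq : (fun y => c ^ 2 * 2 * a * (Real.sin (a * y) * Real.cos (a * y)))
        = fun y => c ^ 2 * (2 * Real.sin (a * y) * (Real.cos (a * y) * a)) := by
      funext y; ring
    simp only [Pi.mul_apply] at h
    rw [heq] at h
    refine h.congr_deriv ?_
    ring
  have hderiv2 : deriv (deriv (fun y => Q y ^ 2)) x
      = c ^ 2 * 2 * a * a * (Real.cos (a * x) ^ 2 - Real.sin (a * x) ^ 2) := by
    rw [hderiv1]
    exact hd2.deriv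
  rw [hderiv2, hQ x]
  have hpyth : Real.sin (a * x) ^ 2 + Real.cos (a * x) ^ 2 = 1 :=
    Real.sin_sq_add_cos_sq (a * x)
  have haa : a * a = 3 / 8 := by nlinarith [ha2]
  linear_combination
    (-(4 * c ^ 3 * Real.sin (a * x) *
        (Real.cos (a * x) ^ 2 - Real.sin (a * x) ^ 2))) * ha2 +
    (-(3 / 2 * c ^ 3 * Real.sin (a * x))) * hpyth +
    (-(3 / 2 * c * Real.sin (a * x))) * hc2
end
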